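/- Let n ≥ 9 be an integer, q ∈ (0,1), t ∈ ℝ, and let δ_1, …, δ_{⌊√n⌋} be real numbers with |δ_j| ≤ 4j/(3(n−j)) for each j = 1, …, ⌊√n⌋. Then each 1 + δ_j > 0 and |2 ∑_{j=1}^{⌊√n⌋} δ_j cos(jt) / ((q^j + q^{−j})(1 + δ_j))| < (8/(3n − 7√n)) · q/(1−q)². -/

import Mathlib

open Real

set_option maxHeartbeats 1600000 in
theorem gamma4_type_bound (n : ℕ) (hn : 9 ≤ n) (q : ℝ) (hq : 0 < q) (hq1 : q < 1)
    (t : ℝ) (δ : ℕ → ℝ)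
    (hδ : ∀ j ∈ Finset.Icc 1 (Nat.sqrt n), |δ j| ≤ 4 * j / (3 * ((n : ℝ) - j))) :
    (∀ j ∈ Finset.Icc 1 (Nat.sqrt n), 0 < 1 + δ j) ∧
    |2 * ∑ j ∈ Finset.Icc 1 (Nat.sqrt n),
        δ j * Real.cos (j * t) / ((q ^ (j : ℝ) + q ^ (-(j : ℝ))) * (1 + δ j))| <
      8 / (3 * (n : ℝ) - 7 * Real.sqrt n) * (q / (1 - q) ^ 2) := by
  have hn9 : (9:ℝ) ≤ (n:ℝ) := by exact_mod_cast hn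
  have hsq : Real.sqrt n * Real.sqrt n = (n:ℝ) := Real.mul_self_sqrt (by positivity)
  have hsnn : 0 ≤ Real.sqrt n := Real.sqrt_nonneg _
  have hs3 : (3:ℝ) ≤ Real.sqrt n := by nlinarith
  have hd : 0 < 3*(n:ℝ) - 7*Real.sqrt n := by nlinarith
  set d : ℝ := 3*(n:ℝ) - 7*Real.sqrt n with hdd
  have hjfacts : ∀ j ∈ Finset.Icc 1 (Nat.sqrt n),
      (1:ℝ) ≤ (j:ℝ) ∧ (j:ℝ) ≤ Real.sqrt n := by
    intro j hj
    simp only [Finset.mem_Icc] at hj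
    refine ⟨by exact_mod_cast hj.1, ?_⟩
    calc (j:ℝ) ≤ (Nat.sqrt n : ℝ) := by exact_mod_cast hj.2
      _ ≤ Real.sqrt n := Real.nat_sqrt_le_real_sqrt
  -- positivity of 1 + δ j
  have hpos : ∀ j ∈ Finset.Icc 1 (Nat.sqrt n), 0 < 1 + δ j := by
    intro j hj
    obtain ⟨h1, h2⟩ := hjfacts j hj
    have hnj : 0 < 3*((n:ℝ) - j) := by nlinarith
    have hδj := hδ j hj
    have hlt : 4*(j:ℝ) / (3*((n:ℝ)-j)) < 1 := by
      rw [div_lt_one hnj]; nlinarith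
    have := neg_abs_le (δ j)
    nlinarith [abs_nonneg (δ j)]
  refine ⟨hpos, ?_⟩
  -- per-term bound
  have hterm : ∀ j ∈ Finset.Icc 1 (Nat.sqrt n),
      |δ j * Real.cos (j * t) / ((q ^ (j : ℝ) + q ^ (-(j : ℝ))) * (1 + δ j))|
        ≤ 4*(j:ℝ)/d * q ^ j := by
    intro j hj
    obtain ⟨h1, h2⟩ := hjfacts j hj
    have hnj : 0 < 3*((n:ℝ) - j) := by nlinarith
    have hδj := hδ j hj
    have hδj' : |δ j| * (3*((n:ℝ)-j)) ≤ 4*(j:ℝ) := by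
      rw [div_eq_mul_inv] at hδj
      calc |δ j| * (3*((n:ℝ)-j)) ≤ 4*(j:ℝ) * (3*((n:ℝ)-j))⁻¹ * (3*((n:ℝ)-j)) := by
            exact mul_le_mul_of_nonneg_right hδj hnj.le
        _ = 4*(j:ℝ) := by rw [mul_assoc, inv_mul_cancel₀ hnj.ne', mul_one]
    have hpj : (0:ℝ) < q ^ j := pow_pos hq j
    have hrw1 : q ^ ((j:ℕ) : ℝ) = q ^ j := Real.rpow_natCast q j
    have hrw2 : q ^ (-((j:ℕ) : ℝ)) = (q ^ j)⁻¹ := by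
      rw [Real.rpow_neg hq.le, hrw1]
    rw [hrw1, hrw2]
    have h1δ : 0 < 1 + δ j := hpos j hj
    have hDpos : 0 < (q ^ j + (q ^ j)⁻¹) * (1 + δ j) := by positivity
    rw [abs_div, abs_of_pos hDpos, div_le_iff₀ hDpos]
    have hcos : |Real.cos ((j:ℝ) * t)| ≤ 1 := Real.abs_cos_le_one _
    have hnum : |δ j * Real.cos ((j:ℝ) * t)| ≤ |δ j| := by
      rw [abs_mul]
      nlinarith [abs_nonneg (δ j)]
    -- key inequality: |δ j| * d ≤ 4 j * (1 + δ j)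
    have hkey : |δ j| * d ≤ 4*(j:ℝ) * (1 + δ j) := by
      have hnegabs := neg_abs_le (δ j)
      have habs := abs_nonneg (δ j)
      nlinarith [mul_nonneg habs (sub_nonneg.2 h2)]
    have hinv : q ^ j * (q ^ j)⁻¹ = 1 := mul_inv_cancel₀ hpj.ne'
    have hexp : 4*(j:ℝ)/d * q ^ j * ((q ^ j + (q ^ j)⁻¹) * (1 + δ j))
        = 4*(j:ℝ)/d * ((q^j*q^j + q^j*(q^j)⁻¹) * (1 + δ j)) := by ring
    calc |δ j * Real.cos ((j:ℝ) * t)| ≤ |δ j| := hnum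
      _ ≤ 4*(j:ℝ) * (1 + δ j) / d := by
          rw [le_div_iff₀ hd]; exact hkey
      _ ≤ 4*(j:ℝ)/d * q ^ j * ((q ^ j + (q ^ j)⁻¹) * (1 + δ j)) := by
          rw [hexp, hinv]
          have h4d : 0 ≤ 4*(j:ℝ)/d := by positivity
          have : (1:ℝ) * (1 + δ j) ≤ (q^j*q^j + 1) * (1 + δ j) := by
            have h1 : (1:ℝ) ≤ q^j*q^j + 1 := by nlinarith
            exact mul_le_mul_of_nonneg_right h1 h1δ.le
          calc 4*(j:ℝ) * (1 + δ j) / d = 4*(j:ℝ)/d * ((1:ℝ) * (1 + δ j)) := by ring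
            _ ≤ 4*(j:ℝ)/d * ((q^j*q^j + 1) * (1 + δ j)) :=
                mul_le_mul_of_nonneg_left this h4d
  -- sum of j q^j is < q/(1-q)^2
  have hqn : ‖q‖ < 1 := by rw [Real.norm_eq_abs, abs_of_pos hq]; exact hq1
  have hSum : HasSum (fun j : ℕ => (j:ℝ) * q ^ j) (q / (1 - q) ^ 2) :=
    hasSum_coe_mul_geometric_of_norm_lt_one hqn
  have hsumlt : ∑ j ∈ Finset.Icc 1 (Nat.sqrt n), (j:ℝ) * q ^ j < q / (1 - q) ^ 2 := by
    have hmem : (Nat.sqrt n + 1) ∉ Finset.Icc 1 (Nat.sqrt n) := by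
      simp [Nat.succ_le_iff]
    have hstep : ∑ j ∈ Finset.Icc 1 (Nat.sqrt n), (j:ℝ) * q ^ j
        < ∑ j ∈ insert (Nat.sqrt n + 1) (Finset.Icc 1 (Nat.sqrt n)), (j:ℝ) * q ^ j := by
      rw [Finset.sum_insert hmem]
      have : (0:ℝ) < ((Nat.sqrt n + 1 : ℕ):ℝ) * q ^ (Nat.sqrt n + 1) := by positivity
      linarith
    have hle : ∑ j ∈ insert (Nat.sqrt n + 1) (Finset.Icc 1 (Nat.sqrt n)), (j:ℝ) * q ^ j
        ≤ q / (1 - q) ^ 2 := by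
      rw [← hSum.tsum_eq]
      exact Summable.sum_le_tsum _ (fun i _ => by positivity) hSum.summable
    linarith
  -- assemble
  have habs2 : |2 * ∑ j ∈ Finset.Icc 1 (Nat.sqrt n),
      δ j * Real.cos (j * t) / ((q ^ (j : ℝ) + q ^ (-(j : ℝ))) * (1 + δ j))|
      ≤ 2 * ∑ j ∈ Finset.Icc 1 (Nat.sqrt n), 4*(j:ℝ)/d * q ^ j := by
    rw [abs_mul, abs_two]
    have := Finset.abs_sum_le_sum_abs
      (fun j => δ j * Real.cos (j * t) / ((q ^ (j : ℝ) + q ^ (-(j : ℝ))) * (1 + δ j)))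
      (Finset.Icc 1 (Nat.sqrt n))
    have hle := Finset.sum_le_sum hterm
    linarith
  have heq : 2 * ∑ j ∈ Finset.Icc 1 (Nat.sqrt n), 4*(j:ℝ)/d * q ^ j
      = 8/d * ∑ j ∈ Finset.Icc 1 (Nat.sqrt n), (j:ℝ) * q ^ j := by
    rw [Finset.mul_sum, Finset.mul_sum]
    exact Finset.sum_congr rfl fun j _ => by field_simp; ring
  have h8d : (0:ℝ) < 8/d := by positivity
  calc |2 * ∑ j ∈ Finset.Icc 1 (Nat.sqrt n),
      δ j * Real.cos (j * t) / ((q ^ (j : ℝ) + q ^ (-(j : ℝ))) * (1 + δ j))|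
      ≤ 8/d * ∑ j ∈ Finset.Icc 1 (Nat.sqrt n), (j:ℝ) * q ^ j := by rw [← heq]; exact habs2
    _ < 8/d * (q / (1 - q) ^ 2) := by
        exact mul_lt_mul_of_pos_left hsumlt h8d
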